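/- Let a,b,c,d,e,f,h,i,j,p ∈ ℂ and consider a domain-4 symmetric signature of arity n determined by values g_{w,x,y,z} (w+x+y+z = n) satisfying the six Fibonacci recurrences with these parameters. Then g is uniquely determined by its four 'top' values g_{n,0,0,0}, g_{n-1,1,0,0}, g_{n-1,0,1,0}, g_{n-1,0,0,1}: any two such signatures agreeing on these four values are equal. -/
import Mathlib


theorem stmt_17 (a b c d e f h i j p : ℂ)
    (n : ℕ) (g1 g2 : ℕ → ℕ → ℕ → ℕ → ℂ)
    (hg1 : ∀ w x y z : ℕ, w + x + y + z + 2 = n →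
      (g1 w (x+2) y z = g1 (w+2) x y z + a * g1 (w+1) (x+1) y z + b * g1 (w+1) x (y+1) z + c * g1 (w+1) x y (z+1)) ∧
      (g1 w x (y+2) z = g1 (w+2) x y z + d * g1 (w+1) (x+1) y z + e * g1 (w+1) x (y+1) z + f * g1 (w+1) x y (z+1)) ∧
      (g1 w x y (z+2) = g1 (w+2) x y z + h * g1 (w+1) (x+1) y z + i * g1 (w+1) x (y+1) z + j * g1 (w+1) x y (z+1)) ∧
      (g1 w (x+1) (y+1) z = b * g1 (w+1) (x+1) y z + d * g1 (w+1) x (y+1) z + p * g1 (w+1) x y (z+1)) ∧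
      (g1 w (x+1) y (z+1) = c * g1 (w+1) (x+1) y z + p * g1 (w+1) x (y+1) z + h * g1 (w+1) x y (z+1)) ∧
      (g1 w x (y+1) (z+1) = p * g1 (w+1) (x+1) y z + f * g1 (w+1) x (y+1) z + i * g1 (w+1) x y (z+1)))
    (hg2 : ∀ w x y z : ℕ, w + x + y + z + 2 = n →
      (g2 w (x+2) y z = g2 (w+2) x y z + a * g2 (w+1) (x+1) y z + b * g2 (w+1) x (y+1) z + c * g2 (w+1) x y (z+1)) ∧
      (g2 w x (y+2) z = g2 (w+2) x y z + d * g2 (w+1) (x+1) y z + e * g2 (w+1) x (y+1) z + f * g2 (w+1) x y (z+1)) ∧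
      (g2 w x y (z+2) = g2 (w+2) x y z + h * g2 (w+1) (x+1) y z + i * g2 (w+1) x (y+1) z + j * g2 (w+1) x y (z+1)) ∧
      (g2 w (x+1) (y+1) z = b * g2 (w+1) (x+1) y z + d * g2 (w+1) x (y+1) z + p * g2 (w+1) x y (z+1)) ∧
      (g2 w (x+1) y (z+1) = c * g2 (w+1) (x+1) y z + p * g2 (w+1) x (y+1) z + h * g2 (w+1) x y (z+1)) ∧
      (g2 w x (y+1) (z+1) = p * g2 (w+1) (x+1) y z + f * g2 (w+1) x (y+1) z + i * g2 (w+1) x y (z+1)))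
    (htop0 : g1 n 0 0 0 = g2 n 0 0 0)
    (htop1 : g1 (n-1) 1 0 0 = g2 (n-1) 1 0 0)
    (htop2 : g1 (n-1) 0 1 0 = g2 (n-1) 0 1 0)
    (htop3 : g1 (n-1) 0 0 1 = g2 (n-1) 0 0 1) :
    ∀ w x y z : ℕ, w + x + y + z = n → g1 w x y z = g2 w x y z := by
  have key : ∀ s : ℕ, ∀ w x y z : ℕ, x + y + z = s → w + x + y + z = n →
      g1 w x y z = g2 w x y z := by
    intro s
    induction s using Nat.strong_induction_on with
    | _ s ih =>
      have IH : ∀ w' x' y' z' : ℕ, x' + y' + z' < s → w' + x' + y' + z' = n →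
          g1 w' x' y' z' = g2 w' x' y' z' := fun w' x' y' z' hlt hn' =>
        ih _ hlt w' x' y' z' rfl hn'
      intro w x y z hs hn
      match x, y, z with
      | 0, 0, 0 =>
        have : w = n := by omega
        subst this; exact htop0
      | 1, 0, 0 =>
        have : w = n - 1 := by omega
        subst this; exact htop1
      | 0, 1, 0 =>
        have : w = n - 1 := by omega
        subst this; exact htop2
      | 0, 0, 1 =>
        have : w = n - 1 := by omega
        subst this; exact htop3
      | x+2, y, z =>
        have h2 : w + x + y + z + 2 = n := by omega
        rw [(hg1 w x y z h2).1, (hg2 w x y z h2).1,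
          IH (w+2) x y z (by omega) (by omega),
          IH (w+1) (x+1) y z (by omega) (by omega),
          IH (w+1) x (y+1) z (by omega) (by omega),
          IH (w+1) x y (z+1) (by omega) (by omega)]
      | 1, y+1, z =>
        have h2 : w + 0 + y + z + 2 = n := by omega
        rw [(hg1 w 0 y z h2).2.2.2.1, (hg2 w 0 y z h2).2.2.2.1,
          IH (w+1) 1 y z (by omega) (by omega),
          IH (w+1) 0 (y+1) z (by omega) (by omega),
          IH (w+1) 0 y (z+1) (by omega) (by omega)]
      | 1, 0, z+1 =>
        have h2 : w + 0 + 0 + z + 2 = n := by omega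
        rw [(hg1 w 0 0 z h2).2.2.2.2.1, (hg2 w 0 0 z h2).2.2.2.2.1,
          IH (w+1) 1 0 z (by omega) (by omega),
          IH (w+1) 0 1 z (by omega) (by omega),
          IH (w+1) 0 0 (z+1) (by omega) (by omega)]
      | 0, y+2, z =>
        have h2 : w + 0 + y + z + 2 = n := by omega
        rw [(hg1 w 0 y z h2).2.1, (hg2 w 0 y z h2).2.1,
          IH (w+2) 0 y z (by omega) (by omega),
          IH (w+1) 1 y z (by omega) (by omega),
          IH (w+1) 0 (y+1) z (by omega) (by omega),
          IH (w+1) 0 y (z+1) (by omega) (by omega)]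
      | 0, 1, z+1 =>
        have h2 : w + 0 + 0 + z + 2 = n := by omega
        rw [(hg1 w 0 0 z h2).2.2.2.2.2, (hg2 w 0 0 z h2).2.2.2.2.2,
          IH (w+1) 1 0 z (by omega) (by omega),
          IH (w+1) 0 1 z (by omega) (by omega),
          IH (w+1) 0 0 (z+1) (by omega) (by omega)]
      | 0, 0, z+2 =>
        have h2 : w + 0 + 0 + z + 2 = n := by omega
        rw [(hg1 w 0 0 z h2).2.2.1, (hg2 w 0 0 z h2).2.2.1,
          IH (w+2) 0 0 z (by omega) (by omega),
          IH (w+1) 1 0 z (by omega) (by omega),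
          IH (w+1) 0 1 z (by omega) (by omega),
          IH (w+1) 0 0 (z+1) (by omega) (by omega)]
  exact fun w x y z hn => key (x+y+z) w x y z rfl hn
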